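/- arXiv:1006.4859 — 2 statements merged into one kernel-verified Lean document; each statement's English description precedes it below -/
import Mathlib

section
/- Let ρ_{abc} = |Ω⟩⟨Ω| be a tripartite pure state, and let v, w be two orthonormal bases of H_a. Then χ(v, b) − χ(w, b) = χ(v, c) − χ(w, c): the difference in the amounts of v-type and w-type information about a is the same in b and in c. -/
open scoped Kronecker ComplexOrder
open Matrix

noncomputable section

variable {n : Type*} [Fintype n] [DecidableEq n]

/-- Apply a real function to a (Hermitian) matrix via the spectral theorem. -/
def matFun (f : ℝ → ℝ) (A : Matrix n n ℂ) : Matrix n n ℂ :=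
  if h : A.IsHermitian then
    (h.eigenvectorUnitary : Matrix n n ℂ) *
      Matrix.diagonal (fun i => (f (h.eigenvalues i) : ℂ)) *
      (star (h.eigenvectorUnitary : Matrix n n ℂ))
  else 0

/-- Matrix logarithm (on the support; `log 0 = 0` in `Real.log`). -/
def matLog : Matrix n n ℂ → Matrix n n ℂ := matFun Real.log

/-- Matrix square root via the spectral theorem. -/
def matSqrt : Matrix n n ℂ → Matrix n n ℂ := matFun Real.sqrt

/-- Von Neumann entropy `S(ρ) = -Tr(ρ log ρ)`. -/
def vN (ρ : Matrix n n ℂ) : ℝ := -(Matrix.trace (ρ * matLog ρ)).re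

/-- Quantum relative entropy `S(A‖B) = Tr(A log A) - Tr(A log B)`. -/
def relEnt (A B : Matrix n n ℂ) : ℝ :=
  (Matrix.trace (A * matLog A)).re - (Matrix.trace (A * matLog B)).re

/-- Shannon entropy of a probability vector. -/
def shannon {ι : Type*} [Fintype ι] (p : ι → ℝ) : ℝ := -∑ j, p j * Real.log (p j)

/-- Largest eigenvalue of a Hermitian matrix. -/
def maxEig (A : Matrix n n ℂ) : ℝ :=
  if h : A.IsHermitian then ⨆ i, h.eigenvalues i else 0

/-- Squared operator (sup) norm `‖A‖_∞² = λmax(AᴴA)`. -/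
def opNormSq (A : Matrix n n ℂ) : ℝ := maxEig (Aᴴ * A)

/-- `r(P,Q) = max_{j,k} ‖√P_j √Q_k‖_∞²`. -/
def rOverlap {ι κ : Type*} [Fintype ι] [Fintype κ]
    (P : ι → Matrix n n ℂ) (Q : κ → Matrix n n ℂ) : ℝ :=
  ⨆ j, ⨆ k, opNormSq (matSqrt (P j) * matSqrt (Q k))

/-- A density operator: positive semidefinite with unit trace. -/
def IsDensity (ρ : Matrix n n ℂ) : Prop := ρ.PosSemidef ∧ Matrix.trace ρ = 1

/-- A (finite) POVM. -/
def IsPOVM {ι : Type*} [Fintype ι] (P : ι → Matrix n n ℂ) : Prop :=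
  (∀ j, (P j).PosSemidef) ∧ ∑ j, P j = 1

/-- A rank-1 POVM: every element is of the form `|x⟩⟨x|`. -/
def IsRankOnePOVM {ι : Type*} [Fintype ι] (P : ι → Matrix n n ℂ) : Prop :=
  IsPOVM P ∧ ∀ j, ∃ x : n → ℂ, P j = Matrix.vecMulVec x (star x)

/-- The rank-one projector `|x⟩⟨x|` onto the vector `x`. -/
def projVec (x : n → ℂ) : Matrix n n ℂ := Matrix.vecMulVec x (star x)

/-- A family of unit vectors forming an orthonormal basis. -/
def IsONBasis (v : n → (n → ℂ)) : Prop :=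
  ∀ j k, (∑ i, (starRingEnd ℂ) (v j i) * v k i) = if j = k then 1 else 0

/-- Two bases are mutually unbiased. -/
def IsMU (v w : n → (n → ℂ)) : Prop :=
  ∀ j k, ‖∑ i, (starRingEnd ℂ) (v j i) * w k i‖ ^ 2 = 1 / (Fintype.card n : ℝ)

/-- A pure state (a rank-one density operator). -/
def IsPure (ρ : Matrix n n ℂ) : Prop :=
  ∃ ψ : n → ℂ, ρ = Matrix.vecMulVec ψ (star ψ)


/-- A projective decomposition of the identity: orthogonal projectors summing to `I`. -/
def IsProjDecomp {ι : Type*} [Fintype ι] (Pr : ι → Matrix n n ℂ) : Prop :=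
  (∀ j, (Pr j).IsHermitian ∧ Pr j * Pr j = Pr j) ∧ ∑ j, Pr j = 1

variable {α β γ : Type*} [Fintype α] [DecidableEq α] [Fintype β] [DecidableEq β]
  [Fintype γ] [DecidableEq γ]

/-- Partial trace over the first factor. -/
def ptrFst (ρ : Matrix (α × β) (α × β) ℂ) : Matrix β β ℂ :=
  Matrix.of fun j j' => ∑ i, ρ (i, j) (i, j')

/-- Partial trace over the second factor. -/
def ptrSnd (ρ : Matrix (α × β) (α × β) ℂ) : Matrix α α ℂ :=
  Matrix.of fun i i' => ∑ j, ρ (i, j) (i', j)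

/-- `Tr_a[(P ⊗ I) ρ_{ab}]`, the unnormalized conditional state on `b`. -/
def condB (P : Matrix α α ℂ) (ρab : Matrix (α × β) (α × β) ℂ) : Matrix β β ℂ :=
  ptrFst ((P ⊗ₖ (1 : Matrix β β ℂ)) * ρab)

/-- Probability of POVM element `P` on the `a` part of `ρ_{ab}`. -/
def probB (P : Matrix α α ℂ) (ρab : Matrix (α × β) (α × β) ℂ) : ℝ :=
  (Matrix.trace ((P ⊗ₖ (1 : Matrix β β ℂ)) * ρab)).re

/-- Holevo quantity `χ(P, b) = S(ρ_b) - ∑_j p_j S(ρ_{bj})`. -/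
def holevo {ι : Type*} [Fintype ι] (P : ι → Matrix α α ℂ)
    (ρab : Matrix (α × β) (α × β) ℂ) : ℝ :=
  vN (ptrFst ρab) -
    ∑ j, probB (P j) ρab * vN ((probB (P j) ρab)⁻¹ • condB (P j) ρab)

/-- Missing information `H(P|b) = H({p_j}) - χ(P, b)`. -/
def missing {ι : Type*} [Fintype ι] (P : ι → Matrix α α ℂ)
    (ρab : Matrix (α × β) (α × β) ℂ) : ℝ :=
  shannon (fun j => probB (P j) ρab) - holevo P ρab

/-- Tripartite reduction `ρ_{ab}` from `ρ_{abc}` (indices `α × β × γ`). -/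
def redAB (ρ : Matrix (α × β × γ) (α × β × γ) ℂ) : Matrix (α × β) (α × β) ℂ :=
  Matrix.of fun x y => ∑ k, ρ (x.1, x.2, k) (y.1, y.2, k)

/-- Tripartite reduction `ρ_{ac}` from `ρ_{abc}`. -/
def redAC (ρ : Matrix (α × β × γ) (α × β × γ) ℂ) : Matrix (α × γ) (α × γ) ℂ :=
  Matrix.of fun x y => ∑ j, ρ (x.1, j, x.2) (y.1, j, y.2)

/-- Tripartite reduction `ρ_a`. -/
def redA (ρ : Matrix (α × β × γ) (α × β × γ) ℂ) : Matrix α α ℂ :=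
  ptrSnd (redAB ρ)

/-- Tripartite reduction `ρ_b`. -/
def redB (ρ : Matrix (α × β × γ) (α × β × γ) ℂ) : Matrix β β ℂ :=
  ptrFst (redAB ρ)

/-- Tripartite reduction `ρ_c`. -/
def redC (ρ : Matrix (α × β × γ) (α × β × γ) ℂ) : Matrix γ γ ℂ :=
  ptrFst (redAC ρ)

end

noncomputable section AuxHolevo
open Polynomial

section Spectral
variable {m l : Type*} [Fintype m] [DecidableEq m] [Fintype l] [DecidableEq l]

private lemma trace_conj_unitary (U B : Matrix m m ℂ) (h2 : star U * U = 1) :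
    Matrix.trace (U * B * star U) = Matrix.trace B := by
  rw [Matrix.trace_mul_cycle, h2, one_mul]

private lemma det_smul_one_sub {A : Matrix m m ℂ} (hA : A.IsHermitian) (x : ℂ) :
    (x • (1 : Matrix m m ℂ) - A).det = ∏ i, (x - (hA.eigenvalues i : ℂ)) := by
  set U := (hA.eigenvectorUnitary : Matrix m m ℂ) with hUdef
  have h1 : U * star U = 1 := (Matrix.mem_unitaryGroup_iff).mp (hA.eigenvectorUnitary).2
  have h2 : star U * U = 1 := mul_eq_one_comm.mp h1
  have key : x • (1 : Matrix m m ℂ) - A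
      = U * (x • 1 - Matrix.diagonal (RCLike.ofReal ∘ hA.eigenvalues)) * star U := by
    rw [Matrix.mul_sub, Matrix.sub_mul, Matrix.mul_smul, mul_one, Matrix.smul_mul, h1]
    nth_rewrite 1 [hA.spectral_theorem]
    rfl
  rw [key, Matrix.det_mul, Matrix.det_mul]
  have hdet1 : U.det * (star U).det = 1 := by
    rw [← Matrix.det_mul, h1, Matrix.det_one]
  have : x • (1 : Matrix m m ℂ) - Matrix.diagonal (RCLike.ofReal ∘ hA.eigenvalues)
      = Matrix.diagonal (fun i => x - (hA.eigenvalues i : ℂ)) := by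
    ext i j
    by_cases h : i = j <;> simp [Matrix.one_apply, Matrix.diagonal, h]
  rw [this, Matrix.det_diagonal]
  ring_nf
  rw [mul_comm (U.det)] at hdet1
  calc U.det * (∏ i, (x - (hA.eigenvalues i : ℂ))) * (star U).det
      = (star U).det * U.det * ∏ i, (x - (hA.eigenvalues i : ℂ)) := by ring
    _ = _ := by rw [hdet1, one_mul]

private lemma trace_mul_matFun (f : ℝ → ℝ) {A : Matrix m m ℂ} (hA : A.IsHermitian) :
    Matrix.trace (A * matFun f A)
      = ∑ i, ((hA.eigenvalues i : ℂ) * (f (hA.eigenvalues i) : ℂ)) := by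
  rw [matFun, dif_pos hA]
  set U := (hA.eigenvectorUnitary : Matrix m m ℂ) with hUdef
  have h1 : U * star U = 1 := (Matrix.mem_unitaryGroup_iff).mp (hA.eigenvectorUnitary).2
  have h2 : star U * U = 1 := mul_eq_one_comm.mp h1
  set D := Matrix.diagonal (RCLike.ofReal ∘ hA.eigenvalues : m → ℂ) with hD
  set Df := Matrix.diagonal (fun i => (f (hA.eigenvalues i) : ℂ)) with hDf
  have key : A * (U * Df * star U) = U * (D * Df) * star U := by
    nth_rewrite 1 [hA.spectral_theorem]
    simp only [Unitary.conjStarAlgAut_apply, ← hUdef, ← hD, Matrix.mul_assoc]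
    rw [← Matrix.mul_assoc (star U) U, h2, one_mul]
  rw [key, trace_conj_unitary _ _ h2, hD, hDf, Matrix.diagonal_mul_diagonal,
    Matrix.trace_diagonal]
  rfl

private lemma sum_h_eigenvalues_eq
    (h : ℝ → ℝ) (h0 : h 0 = 0) {A : Matrix m m ℂ} {B : Matrix l l ℂ}
    (hA : A.IsHermitian) (hB : B.IsHermitian)
    (hdet : ∀ x : ℂ, x ≠ 0 →
      x ^ (Fintype.card l) * (x • (1 : Matrix m m ℂ) - A).det
        = x ^ (Fintype.card m) * (x • (1 : Matrix l l ℂ) - B).det) :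
    ∑ i, h (hA.eigenvalues i) = ∑ j, h (hB.eigenvalues j) := by
  classical
  set μ : Multiset ℂ := Finset.univ.val.map (fun i => (hA.eigenvalues i : ℂ)) with hμ
  set ν : Multiset ℂ := Finset.univ.val.map (fun j => (hB.eigenvalues j : ℂ)) with hν
  set p : Polynomial ℂ :=
    ((Multiset.replicate (Fintype.card l) (0 : ℂ) + μ).map (fun a => X - C a)).prod with hp
  set q : Polynomial ℂ :=
    ((Multiset.replicate (Fintype.card m) (0 : ℂ) + ν).map (fun a => X - C a)).prod with hq
  have heval : ∀ (x : ℂ) (c : ℕ) (s : Multiset ℂ),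
      (((Multiset.replicate c (0 : ℂ) + s).map (fun a => X - C a)).prod).eval x
        = x ^ c * (s.map (fun a => x - a)).prod := by
    intro x c s
    rw [Polynomial.eval_multiset_prod, Multiset.map_map, Multiset.map_add,
      Multiset.map_replicate, Multiset.prod_add, Multiset.prod_replicate]
    simp [Function.comp]
  have hμprod : ∀ x : ℂ, (μ.map (fun a => x - a)).prod = ∏ i, (x - (hA.eigenvalues i : ℂ)) := by
    intro x
    rw [hμ, Multiset.map_map, Finset.prod_eq_multiset_prod]
    rfl
  have hνprod : ∀ x : ℂ, (ν.map (fun a => x - a)).prod = ∏ j, (x - (hB.eigenvalues j : ℂ)) := by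
    intro x
    rw [hν, Multiset.map_map, Finset.prod_eq_multiset_prod]
    rfl
  have hpq : p = q := by
    apply Polynomial.eq_of_infinite_eval_eq
    apply Set.Infinite.mono (s := ({0}ᶜ : Set ℂ))
    · intro x hx
      have hx0 : x ≠ 0 := hx
      show p.eval x = q.eval x
      rw [hp, hq, heval, heval, hμprod, hνprod, ← det_smul_one_sub hA x,
        ← det_smul_one_sub hB x]
      exact hdet x hx0
    · exact Set.Finite.infinite_compl (Set.finite_singleton 0)
  have hroots : Multiset.replicate (Fintype.card l) (0 : ℂ) + μ
      = Multiset.replicate (Fintype.card m) (0 : ℂ) + ν := by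
    have := congrArg Polynomial.roots hpq
    rwa [hp, hq, Polynomial.roots_multiset_prod_X_sub_C,
      Polynomial.roots_multiset_prod_X_sub_C] at this
  set g : ℂ → ℝ := fun z => h z.re with hg
  have hsum := congrArg (fun s : Multiset ℂ => (s.map g).sum) hroots
  simp only [Multiset.map_add, Multiset.sum_add, Multiset.map_replicate, hg,
    Complex.zero_re, h0, Multiset.sum_replicate, smul_zero, zero_add] at hsum
  rw [hμ, hν, Multiset.map_map, Multiset.map_map] at hsum
  rw [Finset.sum_eq_multiset_sum, Finset.sum_eq_multiset_sum]
  convert hsum using 2 <;> rfl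

private lemma det_WA (M : Matrix m l ℂ) (x : ℂ) (hx : x ≠ 0) :
    x ^ (Fintype.card l) * (x • (1 : Matrix m m ℂ) - M * Mᴴ).det
      = x ^ (Fintype.card m) * (x • (1 : Matrix l l ℂ) - Mᴴ * M).det := by
  have e1 : x • (1 : Matrix m m ℂ) - M * Mᴴ
      = x • ((1 : Matrix m m ℂ) + ((-x⁻¹) • M) * Mᴴ) := by
    have hxx : x * (-x⁻¹) = -1 := by field_simp
    rw [smul_add, Matrix.smul_mul, smul_smul, hxx, neg_one_smul, ← sub_eq_add_neg]
  have e2 : x • (1 : Matrix l l ℂ) - Mᴴ * M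
      = x • ((1 : Matrix l l ℂ) + Mᴴ * ((-x⁻¹) • M)) := by
    have hxx : x * (-x⁻¹) = -1 := by field_simp
    rw [smul_add, Matrix.mul_smul, smul_smul, hxx, neg_one_smul, ← sub_eq_add_neg]
  rw [e1, e2, Matrix.det_smul, Matrix.det_smul, Matrix.det_one_add_mul_comm]
  ring

private lemma sum_h_MMH_comm (h : ℝ → ℝ) (h0 : h 0 = 0) (M : Matrix m l ℂ) :
    ∑ i, h ((Matrix.isHermitian_mul_conjTranspose_self M).eigenvalues i)
      = ∑ j, h ((Matrix.isHermitian_mul_conjTranspose_self Mᵀ).eigenvalues j) := by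
  have h1 := sum_h_eigenvalues_eq h h0 (Matrix.isHermitian_mul_conjTranspose_self M)
    (Matrix.isHermitian_conjTranspose_mul_self M) (fun x hx => det_WA M x hx)
  rw [h1]
  have e : Mᴴ * M = ((Mᵀ * Mᵀᴴ))ᵀ := by
    rw [Matrix.transpose_mul, Matrix.transpose_transpose]
    congr 1
  have hdet : ∀ x : ℂ, x ≠ 0 →
      x ^ (Fintype.card l) * (x • (1 : Matrix l l ℂ) - Mᴴ * M).det
        = x ^ (Fintype.card l) * (x • (1 : Matrix l l ℂ) - Mᵀ * Mᵀᴴ).det := by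
    intro x _
    congr 1
    rw [e, ← Matrix.det_transpose (x • (1 : Matrix l l ℂ) - Mᵀ * Mᵀᴴ)]
    congr 1
    rw [Matrix.transpose_sub, Matrix.transpose_smul, Matrix.transpose_one]
  exact sum_h_eigenvalues_eq h h0 (Matrix.isHermitian_conjTranspose_mul_self M)
    (Matrix.isHermitian_mul_conjTranspose_self Mᵀ) hdet

private lemma vN_eq_sum (M : Matrix m l ℂ) :
    vN (M * Mᴴ) = -∑ i, (fun t => t * Real.log t)
      ((Matrix.isHermitian_mul_conjTranspose_self M).eigenvalues i) := by
  have hA := Matrix.isHermitian_mul_conjTranspose_self M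
  have ht := trace_mul_matFun Real.log hA
  rw [vN, show matLog (M * Mᴴ) = matFun Real.log (M * Mᴴ) from rfl, ht]
  rw [neg_inj.symm]
  push_cast
  rw [Complex.re_sum]
  simp

private lemma vN_MMH_transpose (M : Matrix m l ℂ) :
    vN (M * Mᴴ) = vN (Mᵀ * Mᵀᴴ) := by
  rw [vN_eq_sum M, vN_eq_sum Mᵀ, sum_h_MMH_comm (fun t => t * Real.log t) (by simp) M]

end Spectral

section Cond
variable {α β γ : Type*} [Fintype α] [DecidableEq α] [Fintype β] [DecidableEq β]
  [Fintype γ] [DecidableEq γ]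

/-- The conditional amplitude matrix `M j k = ⟨x|ψ(·,j,k)⟩`. -/
private def condMat (ψ : α × β × γ → ℂ) (x : α → ℂ) : Matrix β γ ℂ :=
  Matrix.of fun j k => ∑ i, (starRingEnd ℂ) (x i) * ψ (i, j, k)

private lemma condB_AB_eq (ψ : α × β × γ → ℂ) (x : α → ℂ) :
    condB (projVec x) (redAB (Matrix.vecMulVec ψ (star ψ)))
      = condMat ψ x * (condMat ψ x)ᴴ := by
  ext j j'
  simp only [condB, ptrFst, Matrix.of_apply, Matrix.mul_apply, Matrix.kroneckerMap_apply,
    Matrix.one_apply, redAB, Matrix.vecMulVec_apply, projVec, Pi.star_apply,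
    Fintype.sum_prod_type, Matrix.conjTranspose_apply, condMat, mul_ite, mul_zero, mul_one,
    ite_mul, zero_mul, Finset.sum_ite_eq, Finset.mem_univ, if_true]
  simp only [Finset.mul_sum, Finset.sum_mul, map_sum, _root_.map_mul, Complex.star_def,
    RingHomCompTriple.comp_apply, RingHom.id_apply, starRingEnd_self_apply]
  conv_rhs => rw [Finset.sum_comm]
  conv_rhs => enter [2]; ext a; rw [Finset.sum_comm]
  apply Finset.sum_congr rfl
  intro i _
  apply Finset.sum_congr rfl
  intro a _
  apply Finset.sum_congr rfl
  intro k _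
  ring

private lemma condB_AC_eq (ψ : α × β × γ → ℂ) (x : α → ℂ) :
    condB (projVec x) (redAC (Matrix.vecMulVec ψ (star ψ)))
      = (condMat ψ x)ᵀ * ((condMat ψ x)ᵀ)ᴴ := by
  ext k k'
  simp only [condB, ptrFst, Matrix.of_apply, Matrix.mul_apply, Matrix.kroneckerMap_apply,
    Matrix.one_apply, redAC, Matrix.vecMulVec_apply, projVec, Pi.star_apply,
    Fintype.sum_prod_type, Matrix.conjTranspose_apply, Matrix.transpose_apply, condMat,
    mul_ite, mul_zero, mul_one, ite_mul, zero_mul, Finset.sum_ite_eq, Finset.mem_univ, if_true]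
  simp only [Finset.mul_sum, Finset.sum_mul, map_sum, _root_.map_mul, Complex.star_def,
    RingHomCompTriple.comp_apply, RingHom.id_apply, starRingEnd_self_apply]
  conv_rhs => rw [Finset.sum_comm]
  conv_rhs => enter [2]; ext a; rw [Finset.sum_comm]
  apply Finset.sum_congr rfl
  intro i _
  apply Finset.sum_congr rfl
  intro a _
  apply Finset.sum_congr rfl
  intro k _
  ring

private lemma trace_ptrFst (σ : Matrix (α × β) (α × β) ℂ) :
    Matrix.trace (ptrFst σ) = Matrix.trace σ := by
  simp only [Matrix.trace, Matrix.diag, ptrFst, Matrix.of_apply, Fintype.sum_prod_type]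
  rw [Finset.sum_comm]

private lemma probB_eq_trace_cond (P : Matrix α α ℂ) (ρab : Matrix (α × β) (α × β) ℂ) :
    probB P ρab = (Matrix.trace (condB P ρab)).re := by
  rw [probB, condB, trace_ptrFst]

private lemma trace_MMH {m l : Type*} [Fintype m] [DecidableEq m] [Fintype l] [DecidableEq l]
    (M : Matrix m l ℂ) :
    Matrix.trace (M * Mᴴ) = ((∑ j, ∑ k, Complex.normSq (M j k) : ℝ) : ℂ) := by
  simp only [Matrix.trace, Matrix.diag, Matrix.mul_apply, Matrix.conjTranspose_apply,
    Complex.star_def, Complex.mul_conj]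
  push_cast
  rfl

private lemma real_smul_matrix {m l : Type*} (r : ℝ) (A : Matrix m l ℂ) :
    r • A = ((r : ℂ)) • A := by
  ext i j
  simp [Complex.real_smul]

end Cond

end AuxHolevo

/-- for a tripartite pure state,
`χ(v,b) − χ(w,b) = χ(v,c) − χ(w,c)` for orthonormal bases `v, w` of `H_a`. -/
theorem holevo_difference_same_in_b_and_c {α β γ : Type*}
    [Fintype α] [DecidableEq α] [Fintype β] [DecidableEq β] [Fintype γ] [DecidableEq γ]
    (ρ : Matrix (α × β × γ) (α × β × γ) ℂ) (hρ : IsDensity ρ) (hpure : IsPure ρ)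
    (v w : α → α → ℂ) (hv : IsONBasis v) (hw : IsONBasis w) :
    holevo (fun j => projVec (v j)) (redAB ρ) - holevo (fun j => projVec (w j)) (redAB ρ) =
      holevo (fun j => projVec (v j)) (redAC ρ) - holevo (fun j => projVec (w j)) (redAC ρ) := by
  obtain ⟨ψ, rfl⟩ := hpure
  set ρ := Matrix.vecMulVec ψ (star ψ) with hρdef
  have key : ∀ x : α → ℂ,
      probB (projVec x) (redAB ρ) *
        vN ((probB (projVec x) (redAB ρ))⁻¹ • condB (projVec x) (redAB ρ))
      = probB (projVec x) (redAC ρ) *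
        vN ((probB (projVec x) (redAC ρ))⁻¹ • condB (projVec x) (redAC ρ)) := by
    intro x
    set M := condMat ψ x with hM
    have hb : condB (projVec x) (redAB ρ) = M * Mᴴ := condB_AB_eq ψ x
    have hc : condB (projVec x) (redAC ρ) = Mᵀ * (Mᵀ)ᴴ := condB_AC_eq ψ x
    set S : ℝ := ∑ j, ∑ k, Complex.normSq (M j k) with hS
    have hpb : probB (projVec x) (redAB ρ) = S := by
      rw [probB_eq_trace_cond, hb, trace_MMH]
      simp
      rfl
    have hpc : probB (projVec x) (redAC ρ) = S := by
      rw [probB_eq_trace_cond, hc, trace_MMH]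
      simp only [Complex.ofReal_re]
      rw [hS, Finset.sum_comm]
      apply Finset.sum_congr rfl
      intro k _
      apply Finset.sum_congr rfl
      intro j _
      simp [Matrix.transpose_apply]
    rw [hpb, hpc, hb, hc]
    by_cases hS0 : S = 0
    · rw [hS0]
      ring
    · have hSnonneg : 0 ≤ S := by
        apply Finset.sum_nonneg
        intro j _
        apply Finset.sum_nonneg
        intro k _
        exact Complex.normSq_nonneg _
      have hSpos : 0 < S := lt_of_le_of_ne hSnonneg (Ne.symm hS0)
      set c : ℂ := ((Real.sqrt S⁻¹ : ℝ) : ℂ) with hcdef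
      have hcc : c * c = ((S⁻¹ : ℝ) : ℂ) := by
        rw [hcdef, ← Complex.ofReal_mul, Real.mul_self_sqrt (inv_nonneg.mpr hSnonneg)]
      have h1 : (S⁻¹ : ℝ) • (M * Mᴴ) = (c • M) * ((c • M))ᴴ := by
        rw [Matrix.conjTranspose_smul, Matrix.smul_mul, Matrix.mul_smul, smul_smul]
        rw [real_smul_matrix]
        congr 1
        rw [← hcc, hcdef]
        simp [Complex.conj_ofReal, mul_comm]
      have h2 : (S⁻¹ : ℝ) • (Mᵀ * (Mᵀ)ᴴ) = (c • M)ᵀ * (((c • M))ᵀ)ᴴ := by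
        rw [Matrix.transpose_smul, Matrix.conjTranspose_smul, Matrix.smul_mul,
          Matrix.mul_smul, smul_smul]
        rw [real_smul_matrix]
        congr 1
        rw [← hcc, hcdef]
        simp [Complex.conj_ofReal, mul_comm]
      rw [h1, h2, vN_MMH_transpose (c • M)]
  simp only [holevo]
  have hsumv : ∑ j, probB (projVec (v j)) (redAB ρ) *
        vN ((probB (projVec (v j)) (redAB ρ))⁻¹ • condB (projVec (v j)) (redAB ρ))
      = ∑ j, probB (projVec (v j)) (redAC ρ) *
        vN ((probB (projVec (v j)) (redAC ρ))⁻¹ • condB (projVec (v j)) (redAC ρ)) :=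
    Finset.sum_congr rfl (fun j _ => key (v j))
  have hsumw : ∑ j, probB (projVec (w j)) (redAB ρ) *
        vN ((probB (projVec (w j)) (redAB ρ))⁻¹ • condB (projVec (w j)) (redAB ρ))
      = ∑ j, probB (projVec (w j)) (redAC ρ) *
        vN ((probB (projVec (w j)) (redAC ρ))⁻¹ • condB (projVec (w j)) (redAC ρ)) :=
    Finset.sum_congr rfl (fun j _ => key (w j))
  rw [hsumv, hsumw]
  ring
end

section
/- Let Π = {Π_j} be a projective decomposition of the identity on H_a (orthogonal projectors summing to I_a) and let ρ_{abc} be a tripartite pure state. Then H(Π|c) := H({p_j}) − χ(Π, c) equals the quantum relative entropy S(ρ_{ab} ‖ ∑_j (Π_j ⊗ I_b) ρ_{ab} (Π_j ⊗ I_b)), where p_j = Tr(Π_j ρ_a) and χ(Π, c) = S(ρ_c) − ∑_j p_j S(ρ_{cj}) with p_j ρ_{cj} = Tr_{ab}((Π_j ⊗ I_{bc}) ρ_{abc}). -/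
set_option linter.unusedSectionVars false
set_option maxHeartbeats 1000000


open scoped Kronecker ComplexOrder
open Matrix

namespace Aux

open Polynomial


variable {n : Type*} [Fintype n] [DecidableEq n]

lemma conj_pow (U D : Matrix n n ℂ) (hU : U ∈ Matrix.unitaryGroup n ℂ) (m : ℕ) :
    (U * D * star U) ^ m = U * D ^ m * star U := by
  induction m with
  | zero => simp [Matrix.mem_unitaryGroup_iff.mp hU]
  | succ k ih =>
      have h' : star U * U = 1 := Matrix.mem_unitaryGroup_iff'.mp hU
      rw [pow_succ, ih, pow_succ]
      calc U * D ^ k * star U * (U * D * star U)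
          = U * D ^ k * (star U * U) * D * star U := by
            simp only [Matrix.mul_assoc]
        _ = U * (D ^ k * D) * star U := by
            rw [h']; simp only [Matrix.mul_one, Matrix.mul_assoc]

lemma aeval_conj (q : ℝ[X]) (U D : Matrix n n ℂ) (hU : U ∈ Matrix.unitaryGroup n ℂ) :
    (Polynomial.aeval (U * D * star U)) q = U * (Polynomial.aeval D) q * star U := by
  rw [Polynomial.aeval_eq_sum_range, Polynomial.aeval_eq_sum_range, Finset.mul_sum,
    Finset.sum_mul]
  refine Finset.sum_congr rfl fun i _ => ?_
  rw [conj_pow U D hU, Matrix.mul_smul, Matrix.smul_mul]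

lemma aeval_diagonal (q : ℝ[X]) (d : n → ℝ) :
    (Polynomial.aeval (Matrix.diagonal (fun i => (d i : ℂ)))) q
      = Matrix.diagonal (fun i => ((q.eval (d i) : ℝ) : ℂ)) := by
  rw [Polynomial.aeval_eq_sum_range]
  ext i j
  rw [Matrix.sum_apply]
  by_cases h : i = j
  · subst h
    simp only [Matrix.diagonal_pow, Matrix.smul_apply,
      Matrix.diagonal_apply_eq, Pi.pow_apply]
    rw [Polynomial.eval_eq_sum_range]
    push_cast [Complex.real_smul]
    rfl
  · simp [Matrix.diagonal_pow, Matrix.diagonal_apply_ne _ h]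

lemma spectral_thm' {A : Matrix n n ℂ} (hA : A.IsHermitian) :
    A = (hA.eigenvectorUnitary : Matrix n n ℂ) *
      Matrix.diagonal (RCLike.ofReal ∘ hA.eigenvalues) *
      star (hA.eigenvectorUnitary : Matrix n n ℂ) :=
  hA.spectral_theorem.trans (Unitary.conjStarAlgAut_apply _ _)

section matfun

variable (f : ℝ → ℝ) {A : Matrix n n ℂ}

lemma interp_exists (s : Finset ℝ) : ∃ q : ℝ[X], ∀ x ∈ s, q.eval x = f x :=
  ⟨Lagrange.interpolate s id f, fun x hx => by
    simpa using Lagrange.eval_interpolate_at_node f (Set.injOn_id _) hx⟩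

lemma matFun_of_isHermitian (hA : A.IsHermitian) :
    matFun f A = (hA.eigenvectorUnitary : Matrix n n ℂ) *
      Matrix.diagonal (fun i => (f (hA.eigenvalues i) : ℂ)) *
      (star (hA.eigenvectorUnitary : Matrix n n ℂ)) := by
  rw [matFun, dif_pos hA]

lemma matFun_eq_aeval (hA : A.IsHermitian) (q : ℝ[X])
    (hq : ∀ i, q.eval (hA.eigenvalues i) = f (hA.eigenvalues i)) :
    matFun f A = (Polynomial.aeval A) q := by
  conv_rhs => rw [spectral_thm' hA]
  rw [aeval_conj _ _ _ (hA.eigenvectorUnitary).2]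
  rw [show Matrix.diagonal (RCLike.ofReal ∘ hA.eigenvalues) =
    Matrix.diagonal (fun i => ((hA.eigenvalues i : ℝ) : ℂ)) from rfl]
  rw [aeval_diagonal, matFun_of_isHermitian f hA]
  have : (fun i => ((q.eval (hA.eigenvalues i) : ℝ) : ℂ))
      = fun i => ((f (hA.eigenvalues i) : ℝ) : ℂ) := by
    funext i; rw [hq i]
  rw [this]

lemma matFun_decomp (hA : A.IsHermitian) (V : Matrix n n ℂ)
    (hV : V ∈ Matrix.unitaryGroup n ℂ) (d : n → ℝ)
    (hAd : A = V * Matrix.diagonal (fun i => (d i : ℂ)) * star V) :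
    matFun f A = V * Matrix.diagonal (fun i => (f (d i) : ℂ)) * star V := by
  obtain ⟨q, hq⟩ := interp_exists f
    ((Finset.image hA.eigenvalues Finset.univ) ∪ (Finset.image d Finset.univ))
  rw [matFun_eq_aeval f hA q (fun i => hq _ (by simp))]
  conv_lhs => rw [hAd]
  rw [aeval_conj _ _ _ hV, aeval_diagonal]
  have : (fun i => ((q.eval (d i) : ℝ) : ℂ)) = fun i => ((f (d i) : ℝ) : ℂ) := by
    funext i; rw [hq _ (by simp)]
  rw [this]

lemma trace_matFun (hA : A.IsHermitian) :
    Matrix.trace (matFun f A) = ∑ i, (f (hA.eigenvalues i) : ℂ) := by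
  rw [matFun_of_isHermitian f hA, Matrix.trace_mul_cycle,
    Matrix.mem_unitaryGroup_iff'.mp (hA.eigenvectorUnitary).2, Matrix.one_mul,
    Matrix.trace_diagonal]

lemma conj_mul_conj (U D1 D2 : Matrix n n ℂ) (h : star U * U = 1) :
    (U * D1 * star U) * (U * D2 * star U) = U * (D1 * D2) * star U := by
  calc (U * D1 * star U) * (U * D2 * star U)
      = U * D1 * (star U * U) * D2 * star U := by simp only [Matrix.mul_assoc]
    _ = _ := by rw [h]; simp only [Matrix.mul_one, Matrix.mul_assoc]

lemma mul_matLog_eq (hA : A.IsHermitian) :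
    A * matLog A = matFun (fun x => x * Real.log x) A := by
  rw [matLog, matFun_of_isHermitian Real.log hA,
    matFun_of_isHermitian (fun x => x * Real.log x) hA]
  have h' : star (hA.eigenvectorUnitary : Matrix n n ℂ) *
      (hA.eigenvectorUnitary : Matrix n n ℂ) = 1 :=
    Matrix.mem_unitaryGroup_iff'.mp (hA.eigenvectorUnitary).2
  calc A * ((hA.eigenvectorUnitary : Matrix n n ℂ) *
        Matrix.diagonal (fun i => (Real.log (hA.eigenvalues i) : ℂ)) *
        star (hA.eigenvectorUnitary : Matrix n n ℂ))
      = ((hA.eigenvectorUnitary : Matrix n n ℂ) *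
          Matrix.diagonal (RCLike.ofReal ∘ hA.eigenvalues) *
          star (hA.eigenvectorUnitary : Matrix n n ℂ)) *
        ((hA.eigenvectorUnitary : Matrix n n ℂ) *
          Matrix.diagonal (fun i => (Real.log (hA.eigenvalues i) : ℂ)) *
          star (hA.eigenvectorUnitary : Matrix n n ℂ)) := by
        rw [← spectral_thm' hA]
    _ = (hA.eigenvectorUnitary : Matrix n n ℂ) *
        (Matrix.diagonal (RCLike.ofReal ∘ hA.eigenvalues) *
          Matrix.diagonal (fun i => (Real.log (hA.eigenvalues i) : ℂ))) *
        star (hA.eigenvectorUnitary : Matrix n n ℂ) := conj_mul_conj _ _ _ h'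
    _ = _ := by
        rw [Matrix.diagonal_mul_diagonal]
        congr 2
        funext i
        push_cast
        rfl

end matfun

section master

variable {m' : Type*} [Fintype m'] [DecidableEq m'] {A : Matrix n n ℂ}

lemma trace_aeval (A : Matrix n n ℂ) (q : ℝ[X]) :
    Matrix.trace ((Polynomial.aeval A) q)
      = ∑ i ∈ Finset.range (q.natDegree + 1), q.coeff i • Matrix.trace (A ^ i) := by
  rw [Polynomial.aeval_eq_sum_range, Matrix.trace_sum]
  exact Finset.sum_congr rfl fun i _ => Matrix.trace_smul _ _

lemma trace_xlogx_eq {B : Matrix m' m' ℂ} (hA : A.IsHermitian) (hB : B.IsHermitian)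
    (h : ∀ k : ℕ, k ≠ 0 → Matrix.trace (A ^ k) = Matrix.trace (B ^ k)) :
    Matrix.trace (A * matLog A) = Matrix.trace (B * matLog B) := by
  obtain ⟨q, hq⟩ := interp_exists (fun x => x * Real.log x)
    ((Finset.image hA.eigenvalues Finset.univ ∪ Finset.image hB.eigenvalues Finset.univ)
      ∪ {0})
  have hq0 : q.coeff 0 = 0 := by
    have h0 := hq 0 (Finset.mem_union_right _ (Finset.mem_singleton_self 0))
    rw [Polynomial.coeff_zero_eq_eval_zero, h0]
    simp
  rw [mul_matLog_eq hA, mul_matLog_eq hB,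
    matFun_eq_aeval _ hA q (fun i => hq _ (Finset.mem_union_left _
      (Finset.mem_union_left _ (Finset.mem_image_of_mem _ (Finset.mem_univ i))))),
    matFun_eq_aeval _ hB q (fun i => hq _ (Finset.mem_union_left _
      (Finset.mem_union_right _ (Finset.mem_image_of_mem _ (Finset.mem_univ i))))),
    trace_aeval, trace_aeval]
  refine Finset.sum_congr rfl fun k _ => ?_
  rcases eq_or_ne k 0 with rfl | hk
  · rw [hq0]; simp
  · rw [h k hk]

lemma sum_pow_of_orth {ι : Type*} [Fintype ι] (S : ι → Matrix n n ℂ)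
    (horth : ∀ j k, j ≠ k → S j * S k = 0) :
    ∀ k : ℕ, k ≠ 0 → (∑ j, S j) ^ k = ∑ j, S j ^ k := by
  intro k hk
  induction k with
  | zero => exact absurd rfl hk
  | succ k ih =>
      rcases eq_or_ne k 0 with rfl | hk'
      · simp
      · rw [pow_succ, ih hk', Finset.sum_mul]
        refine Finset.sum_congr rfl fun j _ => ?_
        rw [Finset.mul_sum]
        rw [Finset.sum_eq_single j]
        · rw [← pow_succ]
        · intro l _ hl
          have : S j ^ k * S l = S j ^ (k - 1) * (S j * S l) := by
            conv_lhs => rw [show k = (k - 1) + 1 from (Nat.succ_pred_eq_of_pos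
              (Nat.pos_of_ne_zero hk')).symm]
            rw [pow_succ, Matrix.mul_assoc]
          rw [this, horth j l (Ne.symm hl), Matrix.mul_zero]
        · intro hj; exact absurd (Finset.mem_univ j) hj

lemma trace_xlogx_sum {ι : Type*} [Fintype ι] (S : ι → Matrix n n ℂ)
    (hS : ∀ j, (S j).IsHermitian) (horth : ∀ j k, j ≠ k → S j * S k = 0) :
    Matrix.trace ((∑ j, S j) * matLog (∑ j, S j))
      = ∑ j, Matrix.trace (S j * matLog (S j)) := by
  have hsum : (∑ j, S j).IsHermitian := by
    simp only [Matrix.IsHermitian, Matrix.conjTranspose_sum]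
    exact Finset.sum_congr rfl fun j _ => hS j
  obtain ⟨q, hq⟩ := interp_exists (fun x => x * Real.log x)
    ((Finset.univ.biUnion fun j => Finset.image (hS j).eigenvalues Finset.univ)
      ∪ Finset.image hsum.eigenvalues Finset.univ ∪ {0})
  have hq0 : q.coeff 0 = 0 := by
    have h0 := hq 0 (Finset.mem_union_right _ (Finset.mem_singleton_self 0))
    rw [Polynomial.coeff_zero_eq_eval_zero, h0]
    simp
  rw [mul_matLog_eq hsum, matFun_eq_aeval _ hsum q (fun i => hq _ (Finset.mem_union_left _
    (Finset.mem_union_right _ (Finset.mem_image_of_mem _ (Finset.mem_univ i))))), trace_aeval]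
  have : ∀ j, Matrix.trace (S j * matLog (S j))
      = ∑ i ∈ Finset.range (q.natDegree + 1), q.coeff i • Matrix.trace (S j ^ i) := by
    intro j
    rw [mul_matLog_eq (hS j), matFun_eq_aeval _ (hS j) q (fun i => hq _
      (Finset.mem_union_left _ (Finset.mem_union_left _ (Finset.mem_biUnion.mpr
        ⟨j, Finset.mem_univ j, Finset.mem_image_of_mem _ (Finset.mem_univ i)⟩)))),
      trace_aeval]
  simp_rw [this]
  rw [Finset.sum_comm]
  refine Finset.sum_congr rfl fun k _ => ?_
  rcases eq_or_ne k 0 with rfl | hk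
  · rw [hq0]; simp
  · rw [sum_pow_of_orth S horth k hk, Matrix.trace_sum, Finset.smul_sum]

end master


section entropy

variable {A : Matrix n n ℂ}

noncomputable def ent (A : Matrix n n ℂ) : ℝ := (Matrix.trace (A * matLog A)).re

lemma ent_zero : ent (0 : Matrix n n ℂ) = 0 := by simp [ent]

lemma trace_conj (V D : Matrix n n ℂ) (hV : star V * V = 1) :
    Matrix.trace (V * D * star V) = Matrix.trace D := by
  rw [Matrix.trace_mul_cycle, hV, Matrix.one_mul]

lemma trace_eq_sum_eigenvalues (hA : A.IsHermitian) :
    Matrix.trace A = ∑ i, (hA.eigenvalues i : ℂ) := by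
  calc Matrix.trace A
      = Matrix.trace ((hA.eigenvectorUnitary : Matrix n n ℂ) *
          Matrix.diagonal (RCLike.ofReal ∘ hA.eigenvalues) *
          star (hA.eigenvectorUnitary : Matrix n n ℂ)) := by rw [← spectral_thm' hA]
    _ = _ := by
        rw [trace_conj _ _ (Matrix.mem_unitaryGroup_iff'.mp (hA.eigenvectorUnitary).2),
          Matrix.trace_diagonal]
        rfl

lemma trace_re_eq (hA : A.IsHermitian) :
    (Matrix.trace A).re = ∑ i, hA.eigenvalues i := by
  rw [trace_eq_sum_eigenvalues hA, Complex.re_sum]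
  exact Finset.sum_congr rfl fun i _ => Complex.ofReal_re _

lemma ent_eq_sum (hA : A.IsHermitian) :
    ent A = ∑ i, hA.eigenvalues i * Real.log (hA.eigenvalues i) := by
  rw [ent, mul_matLog_eq hA, trace_matFun _ hA, Complex.re_sum]
  exact Finset.sum_congr rfl fun i _ => Complex.ofReal_re _

lemma isHermitian_decomp (V : Matrix n n ℂ) (d : n → ℝ) :
    (V * Matrix.diagonal (fun i => (d i : ℂ)) * star V).IsHermitian := by
  unfold Matrix.IsHermitian
  rw [Matrix.conjTranspose_mul, Matrix.conjTranspose_mul, Matrix.diagonal_conjTranspose]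
  have : star (fun i => ((d i : ℝ) : ℂ)) = fun i => ((d i : ℝ) : ℂ) := by
    funext i; simp
  rw [this]
  simp [Matrix.mul_assoc, Matrix.star_eq_conjTranspose]

lemma ent_smul (hA : A.IsHermitian) (c : ℝ) (hc : 0 < c) :
    ent (c • A) = c * ent A + c * Real.log c * (Matrix.trace A).re := by
  set U : Matrix n n ℂ := (hA.eigenvectorUnitary : Matrix n n ℂ) with hUdef
  have hU : U ∈ Matrix.unitaryGroup n ℂ := (hA.eigenvectorUnitary).2
  have hdiag : Matrix.diagonal (fun i => ((c * hA.eigenvalues i : ℝ) : ℂ))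
      = c • Matrix.diagonal (RCLike.ofReal ∘ hA.eigenvalues) := by
    ext i j
    rcases eq_or_ne i j with rfl | hij
    · simp [Matrix.diagonal_apply_eq, Complex.real_smul]
    · simp [Matrix.diagonal_apply_ne _ hij]
  have hdec : c • A
      = U * Matrix.diagonal (fun i => ((c * hA.eigenvalues i : ℝ) : ℂ)) * star U := by
    rw [hdiag, mul_smul_comm, smul_mul_assoc, ← spectral_thm' hA]
  have hcA : (c • A).IsHermitian := by rw [hdec]; exact isHermitian_decomp U _
  have h1 : ent (c • A)
      = ∑ i, (c * hA.eigenvalues i) * Real.log (c * hA.eigenvalues i) := by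
    rw [ent, mul_matLog_eq hcA, matFun_decomp _ hcA U hU _ hdec,
      trace_conj _ _ (Matrix.mem_unitaryGroup_iff'.mp hU), Matrix.trace_diagonal,
      Complex.re_sum]
    exact Finset.sum_congr rfl fun i _ => Complex.ofReal_re _
  rw [h1, ent_eq_sum hA, trace_re_eq hA, Finset.mul_sum, Finset.mul_sum,
    ← Finset.sum_add_distrib]
  refine Finset.sum_congr rfl fun i _ => ?_
  rcases eq_or_ne (hA.eigenvalues i) 0 with h0 | h0
  · rw [h0]; ring
  · rw [Real.log_mul (ne_of_gt hc) h0]; ring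

lemma psd_trace_re_nonneg (hA : A.PosSemidef) : 0 ≤ (Matrix.trace A).re := by
  rw [trace_re_eq hA.1]
  exact Finset.sum_nonneg fun i _ => hA.eigenvalues_nonneg i

lemma psd_trace_zero (hA : A.PosSemidef) (h : (Matrix.trace A).re = 0) : A = 0 := by
  have hs : ∑ i, hA.1.eigenvalues i = 0 := by rw [← trace_re_eq hA.1, h]
  have hz : ∀ i, hA.1.eigenvalues i = 0 := fun i =>
    (Finset.sum_eq_zero_iff_of_nonneg (fun i _ => hA.eigenvalues_nonneg i)).mp hs i
      (Finset.mem_univ i)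
  have hD : Matrix.diagonal (RCLike.ofReal ∘ hA.1.eigenvalues) = (0 : Matrix n n ℂ) := by
    ext i j
    rcases eq_or_ne i j with rfl | hij
    · simp [Matrix.diagonal_apply_eq, Function.comp, hz i]
    · simp [Matrix.diagonal_apply_ne _ hij]
  calc A = (hA.1.eigenvectorUnitary : Matrix n n ℂ) *
        Matrix.diagonal (RCLike.ofReal ∘ hA.1.eigenvalues) *
        star (hA.1.eigenvectorUnitary : Matrix n n ℂ) := hA.1.spectral_theorem
    _ = 0 := by rw [hD]; simp

lemma ent_eq_of_trace_pow {m' : Type*} [Fintype m'] [DecidableEq m'] {B : Matrix m' m' ℂ}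
    (hA : A.IsHermitian) (hB : B.IsHermitian)
    (h : ∀ k : ℕ, k ≠ 0 → Matrix.trace (A ^ k) = Matrix.trace (B ^ k)) :
    ent A = ent B := by
  rw [ent, ent, trace_xlogx_eq hA hB h]

lemma ent_sum_of_orth {ι : Type*} [Fintype ι] (S : ι → Matrix n n ℂ)
    (hS : ∀ j, (S j).IsHermitian) (horth : ∀ j k, j ≠ k → S j * S k = 0) :
    ent (∑ j, S j) = ∑ j, ent (S j) := by
  rw [ent, trace_xlogx_sum S hS horth, Complex.re_sum]
  rfl

end entropy

section pinch

variable {ι : Type*} [Fintype ι]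

lemma trace_pinch (Q : ι → Matrix n n ℂ) (ρ : Matrix n n ℂ)
    (hQi : ∀ j, Q j * Q j = Q j)
    (hQo : ∀ j k, j ≠ k → Q j * Q k = 0) (hQ1 : ∑ j, Q j = 1)
    (hσ : (∑ j, Q j * ρ * Q j).IsHermitian) :
    Matrix.trace (ρ * matLog (∑ j, Q j * ρ * Q j))
      = Matrix.trace ((∑ j, Q j * ρ * Q j) * matLog (∑ j, Q j * ρ * Q j)) := by
  set σ : Matrix n n ℂ := ∑ j, Q j * ρ * Q j with hσdef
  have horthσ : ∀ j k, j ≠ k → (Q j * ρ * Q j) * (Q k * ρ * Q k) = 0 := by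
    intro j k hjk
    calc (Q j * ρ * Q j) * (Q k * ρ * Q k) = Q j * ρ * (Q j * Q k) * (ρ * Q k) := by
          simp only [Matrix.mul_assoc]
      _ = 0 := by rw [hQo j k hjk]; simp [Matrix.mul_assoc]
  have hfixL : ∀ j (k : ℕ), k ≠ 0 → Q j * (Q j * ρ * Q j) ^ k = (Q j * ρ * Q j) ^ k := by
    intro j k hk
    obtain ⟨m, rfl⟩ := Nat.exists_eq_succ_of_ne_zero hk
    rw [pow_succ']
    have : Q j * (Q j * ρ * Q j) = Q j * ρ * Q j := by
      simp only [← Matrix.mul_assoc, hQi j]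
    rw [← Matrix.mul_assoc, this]
  have hfixR : ∀ j (k : ℕ), k ≠ 0 → (Q j * ρ * Q j) ^ k * Q j = (Q j * ρ * Q j) ^ k := by
    intro j k hk
    obtain ⟨m, rfl⟩ := Nat.exists_eq_succ_of_ne_zero hk
    rw [pow_succ]
    have : Q j * ρ * Q j * Q j = Q j * ρ * Q j := by
      rw [Matrix.mul_assoc (Q j * ρ) (Q j) (Q j), hQi j]
    rw [Matrix.mul_assoc, this]
  have key : ∀ k : ℕ, Matrix.trace (ρ * σ ^ k) = Matrix.trace (σ * σ ^ k) := by
    intro k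
    rcases eq_or_ne k 0 with rfl | hk
    · simp only [pow_zero, Matrix.mul_one]
      rw [hσdef, Matrix.trace_sum]
      have h2 : ∀ j, Matrix.trace (Q j * ρ * Q j) = Matrix.trace (ρ * Q j) := by
        intro j
        rw [Matrix.trace_mul_cycle, hQi j, Matrix.trace_mul_comm]
      rw [Finset.sum_congr rfl fun j _ => h2 j, ← Matrix.trace_sum]
      rw [← Finset.mul_sum, hQ1, Matrix.mul_one]
    · have hrhs : σ * σ ^ k = ∑ j, (Q j * ρ * Q j) ^ (k + 1) := by
        rw [← pow_succ', hσdef, sum_pow_of_orth _ horthσ (k + 1) (Nat.succ_ne_zero k)]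
      rw [hrhs, hσdef, sum_pow_of_orth _ horthσ k hk, Finset.mul_sum,
        Matrix.trace_sum, Matrix.trace_sum]
      refine Finset.sum_congr rfl fun j _ => ?_
      have hQσ : Q j * (Q j * ρ * Q j) ^ k * Q j = (Q j * ρ * Q j) ^ k := by
        rw [hfixL j k hk, hfixR j k hk]
      calc Matrix.trace (ρ * (Q j * ρ * Q j) ^ k)
          = Matrix.trace (ρ * (Q j * (Q j * ρ * Q j) ^ k * Q j)) := by
            conv_lhs => rw [← hQσ]
        _ = Matrix.trace (ρ * (Q j * (Q j * ρ * Q j) ^ k) * Q j) := by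
            simp only [Matrix.mul_assoc]
        _ = Matrix.trace (Q j * (ρ * (Q j * (Q j * ρ * Q j) ^ k))) := by
            rw [Matrix.trace_mul_comm]
        _ = Matrix.trace ((Q j * ρ * Q j) * (Q j * ρ * Q j) ^ k) := by
            rw [← Matrix.mul_assoc, ← Matrix.mul_assoc]
        _ = Matrix.trace ((Q j * ρ * Q j) ^ (k + 1)) := by rw [← pow_succ']
  obtain ⟨q, hq⟩ := interp_exists Real.log (Finset.image hσ.eigenvalues Finset.univ)
  rw [show matLog σ = matFun Real.log σ from rfl,
    matFun_eq_aeval _ hσ q (fun i => hq _ (Finset.mem_image_of_mem _ (Finset.mem_univ i)))]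
  rw [Polynomial.aeval_eq_sum_range, Finset.mul_sum, Finset.mul_sum,
    Matrix.trace_sum, Matrix.trace_sum]
  refine Finset.sum_congr rfl fun k _ => ?_
  rw [Matrix.mul_smul, Matrix.mul_smul, Matrix.trace_smul, Matrix.trace_smul, key k]

end pinch



section specific

variable {α β γ : Type*} [Fintype α] [DecidableEq α] [Fintype β] [DecidableEq β]
  [Fintype γ] [DecidableEq γ]

/-- The `(ab) × c` amplitude matrix of a pure state. -/
noncomputable def Mmat (ψ : α × β × γ → ℂ) : Matrix (α × β) γ ℂ :=
  Matrix.of fun x k => ψ (x.1, x.2, k)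

lemma redAB_eq (ψ : α × β × γ → ℂ) :
    redAB (Matrix.vecMulVec ψ (star ψ)) = Mmat ψ * (Mmat ψ)ᴴ := by
  ext x y
  simp [redAB, Mmat, Matrix.mul_apply, Matrix.vecMulVec_apply, Matrix.conjTranspose_apply]

lemma ptrFst_redAC_eq (ψ : α × β × γ → ℂ) :
    ptrFst (redAC (Matrix.vecMulVec ψ (star ψ))) = ((Mmat ψ)ᴴ * Mmat ψ)ᵀ := by
  ext k k'
  simp only [ptrFst, redAC, Mmat, Matrix.of_apply, Matrix.transpose_apply, Matrix.mul_apply,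
    Matrix.vecMulVec_apply, Matrix.conjTranspose_apply, Pi.star_apply, RCLike.star_def]
  rw [Fintype.sum_prod_type]
  refine Finset.sum_congr rfl fun a _ => Finset.sum_congr rfl fun b _ => ?_
  ring

lemma kron_mul_M (ψ : α × β × γ → ℂ) (P : Matrix α α ℂ) :
    (P ⊗ₖ (1 : Matrix β β ℂ)) * Mmat ψ
      = Matrix.of (fun (x : α × β) kk => ∑ a'', P x.1 a'' * ψ (a'', x.2, kk)) := by
  ext x kk
  simp only [Matrix.mul_apply, Matrix.kroneckerMap_apply, Matrix.one_apply, Mmat,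
    Matrix.of_apply, Fintype.sum_prod_type, mul_ite, mul_zero, mul_one, ite_mul, zero_mul]
  refine Finset.sum_congr rfl fun a'' _ => ?_
  simp [Finset.sum_ite_eq]

lemma condB_redAC_eq (ψ : α × β × γ → ℂ) (P : Matrix α α ℂ) :
    condB P (redAC (Matrix.vecMulVec ψ (star ψ)))
      = ((Mmat ψ)ᴴ * ((P ⊗ₖ (1 : Matrix β β ℂ)) * Mmat ψ))ᵀ := by
  rw [kron_mul_M]
  ext k k'
  simp only [condB, ptrFst, Mmat, Matrix.of_apply, Matrix.transpose_apply, Matrix.mul_apply,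
    Matrix.kroneckerMap_apply, redAC, Matrix.vecMulVec_apply, Matrix.conjTranspose_apply,
    Pi.star_apply, RCLike.star_def, Matrix.one_apply, Fintype.sum_prod_type, mul_ite,
    mul_zero, mul_one, ite_mul, zero_mul]
  simp only [Finset.sum_ite_eq, Finset.mem_univ, if_true, Finset.mul_sum, Finset.sum_mul]
  refine Finset.sum_congr rfl fun a _ => ?_
  rw [Finset.sum_comm]
  refine Finset.sum_congr rfl fun b _ => Finset.sum_congr rfl fun a2 _ => ?_
  ring

lemma probB_redAC_eq (ψ : α × β × γ → ℂ) (P : Matrix α α ℂ) :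
    probB P (redAC (Matrix.vecMulVec ψ (star ψ)))
      = (Matrix.trace ((Mmat ψ)ᴴ * ((P ⊗ₖ (1 : Matrix β β ℂ)) * Mmat ψ))).re := by
  rw [probB, kron_mul_M]
  congr 1
  simp only [Matrix.trace, Matrix.diag, Matrix.mul_apply, Mmat, Matrix.of_apply,
    Matrix.kroneckerMap_apply, redAC, Matrix.vecMulVec_apply, Matrix.conjTranspose_apply,
    Pi.star_apply, RCLike.star_def, Matrix.one_apply, Fintype.sum_prod_type, mul_ite,
    mul_zero, mul_one, ite_mul, zero_mul]
  simp only [Finset.sum_ite_eq, Finset.mem_univ, if_true, Finset.mul_sum, Finset.sum_mul]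
  rw [Finset.sum_comm]
  refine Finset.sum_congr rfl fun kk _ => Finset.sum_congr rfl fun a _ => ?_
  rw [Finset.sum_comm]
  refine Finset.sum_congr rfl fun b _ => Finset.sum_congr rfl fun a2 _ => ?_
  ring

lemma kron_one_conjTranspose (A : Matrix α α ℂ) :
    (A ⊗ₖ (1 : Matrix β β ℂ))ᴴ = Aᴴ ⊗ₖ (1 : Matrix β β ℂ) := by
  ext x y
  simp only [Matrix.conjTranspose_apply, Matrix.kroneckerMap_apply, Matrix.one_apply,
    mul_ite, mul_zero, mul_one]
  split_ifs with h1 h2 h2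
  · simp
  · exact absurd h1.symm h2
  · exact absurd h2.symm h1
  · simp

lemma kron_one_mul (A B : Matrix α α ℂ) :
    (A ⊗ₖ (1 : Matrix β β ℂ)) * (B ⊗ₖ (1 : Matrix β β ℂ))
      = (A * B) ⊗ₖ (1 : Matrix β β ℂ) := by
  rw [← Matrix.mul_kronecker_mul, Matrix.one_mul]

lemma kron_one_sum {ι : Type*} [Fintype ι] (A : ι → Matrix α α ℂ) :
    ∑ j, (A j ⊗ₖ (1 : Matrix β β ℂ)) = (∑ j, A j) ⊗ₖ (1 : Matrix β β ℂ) := by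
  ext x y
  simp only [Finset.sum_apply, Matrix.sum_apply, Matrix.kroneckerMap_apply]
  rw [← Finset.sum_mul]

lemma projDecomp_orth {ι : Type*} [Fintype ι] {Pr : ι → Matrix α α ℂ}
    (hPr : IsProjDecomp Pr) : ∀ j k, j ≠ k → Pr j * Pr k = 0 := by
  classical
  intro j k hjk
  have hherm := fun l => (hPr.1 l).1
  have hidem := fun l => (hPr.1 l).2
  have hpsd : ∀ l, (Pr l).PosSemidef := by
    intro l
    have : Pr l = (Pr l)ᴴ * Pr l := by rw [hherm l, hidem l]
    rw [this]
    exact Matrix.posSemidef_conjTranspose_mul_self _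
  have hT : ∀ l, (Pr j * Pr l * Pr j).PosSemidef := by
    intro l
    have := (hpsd l).conjTranspose_mul_mul_same (Pr j)
    rwa [hherm j] at this
  -- ∑_{l ≠ j} Pr j * Pr l * Pr j = 0
  have hsum : ∑ l, Pr j * Pr l * Pr j = Pr j := by
    rw [← Finset.sum_mul, ← Finset.mul_sum, hPr.2, Matrix.mul_one, hidem j]
  have hsplit : ∑ l ∈ Finset.univ.erase j, Pr j * Pr l * Pr j = 0 := by
    have hjj : Pr j * Pr j * Pr j = Pr j := by rw [hidem j, hidem j]
    rw [← Finset.add_sum_erase Finset.univ (fun l => Pr j * Pr l * Pr j)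
      (Finset.mem_univ j), hjj] at hsum
    exact add_eq_left.mp hsum
  have htr : ∀ l ∈ Finset.univ.erase j, (Matrix.trace (Pr j * Pr l * Pr j)).re = 0 := by
    have hsumtr : ∑ l ∈ Finset.univ.erase j, (Matrix.trace (Pr j * Pr l * Pr j)).re = 0 := by
      rw [← Complex.re_sum, ← Matrix.trace_sum, hsplit]
      simp
    intro l hl
    exact (Finset.sum_eq_zero_iff_of_nonneg
      (fun l _ => psd_trace_re_nonneg (hT l))).mp hsumtr l hl
  have hTk : Pr j * Pr k * Pr j = 0 :=
    psd_trace_zero (hT k) (htr k (Finset.mem_erase.mpr ⟨Ne.symm hjk, Finset.mem_univ k⟩))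
  -- (Pr k * Pr j)ᴴ * (Pr k * Pr j) = Pr j * Pr k * Pr j
  have hq : (Pr k * Pr j)ᴴ * (Pr k * Pr j) = 0 := by
    rw [Matrix.conjTranspose_mul, hherm j, hherm k]
    calc Pr j * Pr k * (Pr k * Pr j) = Pr j * (Pr k * Pr k) * Pr j := by
          simp only [Matrix.mul_assoc]
      _ = 0 := by rw [hidem k, hTk]
  have hkj : Pr k * Pr j = 0 := Matrix.conjTranspose_mul_self_eq_zero.mp hq
  have := congrArg Matrix.conjTranspose hkj
  rwa [Matrix.conjTranspose_mul, hherm j, hherm k, Matrix.conjTranspose_zero] at this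

lemma trace_pow_mul_conjT {n' m' : Type*} [Fintype n'] [DecidableEq n'] [Fintype m']
    [DecidableEq m'] (X : Matrix n' m' ℂ) :
    ∀ k : ℕ, k ≠ 0 → Matrix.trace ((X * Xᴴ) ^ k) = Matrix.trace ((Xᴴ * X) ^ k) := by
  have hpow : ∀ k : ℕ, (X * Xᴴ) ^ (k + 1) = X * (Xᴴ * X) ^ k * Xᴴ := by
    intro k
    induction k with
    | zero => simp
    | succ k ih =>
        rw [pow_succ, ih, pow_succ]
        simp only [Matrix.mul_assoc]
  intro k hk
  obtain ⟨m, rfl⟩ := Nat.exists_eq_succ_of_ne_zero hk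
  rw [hpow m, Matrix.trace_mul_cycle]
  rw [show Xᴴ * X * (Xᴴ * X) ^ m = (Xᴴ * X) ^ (m + 1) from (pow_succ' _ _).symm]

lemma trace_pow_transpose {n' : Type*} [Fintype n'] [DecidableEq n'] (B : Matrix n' n' ℂ)
    (k : ℕ) : Matrix.trace ((Bᵀ) ^ k) = Matrix.trace (B ^ k) := by
  rw [← Matrix.transpose_pow, Matrix.trace_transpose]

end specific


section main

variable {α β γ ι : Type*} [Fintype α] [DecidableEq α] [Fintype β] [DecidableEq β]
  [Fintype γ] [DecidableEq γ] [Fintype ι]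

lemma main (ψ : α × β × γ → ℂ) (Pr : ι → Matrix α α ℂ) (hPr : IsProjDecomp Pr) :
    missing Pr (redAC (Matrix.vecMulVec ψ (star ψ))) =
      relEnt (redAB (Matrix.vecMulVec ψ (star ψ)))
        (∑ j, (Pr j ⊗ₖ (1 : Matrix β β ℂ)) * redAB (Matrix.vecMulVec ψ (star ψ)) *
          (Pr j ⊗ₖ (1 : Matrix β β ℂ))) := by
  classical
  have horthPr := projDecomp_orth hPr
  have hherm : ∀ l, (Pr l).IsHermitian := fun l => (hPr.1 l).1
  have hidem : ∀ l, Pr l * Pr l = Pr l := fun l => (hPr.1 l).2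
  have hQH : ∀ j, (Pr j ⊗ₖ (1 : Matrix β β ℂ))ᴴ = Pr j ⊗ₖ (1 : Matrix β β ℂ) := fun j => by
    rw [kron_one_conjTranspose, hherm j]
  have hQi : ∀ j, (Pr j ⊗ₖ (1 : Matrix β β ℂ)) * (Pr j ⊗ₖ (1 : Matrix β β ℂ))
      = Pr j ⊗ₖ (1 : Matrix β β ℂ) := fun j => by
    rw [kron_one_mul, hidem j]
  have hQo : ∀ j k, j ≠ k → (Pr j ⊗ₖ (1 : Matrix β β ℂ)) * (Pr k ⊗ₖ (1 : Matrix β β ℂ))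
      = 0 := fun j k hjk => by
    rw [kron_one_mul, horthPr j k hjk, Matrix.zero_kronecker]
  have hQ1 : ∑ j, (Pr j ⊗ₖ (1 : Matrix β β ℂ)) = 1 := by
    rw [kron_one_sum, hPr.2, Matrix.one_kronecker_one]
  -- notation
  have hAB : redAB (Matrix.vecMulVec ψ (star ψ)) = Mmat ψ * (Mmat ψ)ᴴ := redAB_eq ψ
  have hsig : ∀ j, (Pr j ⊗ₖ (1 : Matrix β β ℂ)) * redAB (Matrix.vecMulVec ψ (star ψ)) *
      (Pr j ⊗ₖ (1 : Matrix β β ℂ))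
      = ((Pr j ⊗ₖ (1 : Matrix β β ℂ)) * Mmat ψ) * ((Pr j ⊗ₖ (1 : Matrix β β ℂ)) * Mmat ψ)ᴴ := by
    intro j
    rw [hAB, Matrix.conjTranspose_mul, hQH j]
    simp only [Matrix.mul_assoc]
  have hNN : ∀ j, (Mmat ψ)ᴴ * ((Pr j ⊗ₖ (1 : Matrix β β ℂ)) * Mmat ψ)
      = ((Pr j ⊗ₖ (1 : Matrix β β ℂ)) * Mmat ψ)ᴴ * ((Pr j ⊗ₖ (1 : Matrix β β ℂ)) * Mmat ψ) := by
    intro j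
    rw [Matrix.conjTranspose_mul, hQH j, Matrix.mul_assoc,
      ← Matrix.mul_assoc (Pr j ⊗ₖ (1 : Matrix β β ℂ)) (Pr j ⊗ₖ (1 : Matrix β β ℂ)) (Mmat ψ),
      hQi j]
  -- probabilities and conditional states
  have hpj : ∀ j, probB (Pr j) (redAC (Matrix.vecMulVec ψ (star ψ)))
      = (Matrix.trace (((Pr j ⊗ₖ (1 : Matrix β β ℂ)) * Mmat ψ)ᴴ *
          ((Pr j ⊗ₖ (1 : Matrix β β ℂ)) * Mmat ψ))).re := by
    intro j
    rw [probB_redAC_eq, hNN j]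
  have hCj : ∀ j, condB (Pr j) (redAC (Matrix.vecMulVec ψ (star ψ)))
      = (((Pr j ⊗ₖ (1 : Matrix β β ℂ)) * Mmat ψ)ᴴ * ((Pr j ⊗ₖ (1 : Matrix β β ℂ)) * Mmat ψ))ᵀ := by
    intro j
    rw [condB_redAC_eq, hNN j]
  have hCpsd : ∀ j, (condB (Pr j) (redAC (Matrix.vecMulVec ψ (star ψ)))).PosSemidef := by
    intro j
    rw [hCj j]
    exact (Matrix.posSemidef_conjTranspose_mul_self _).transpose
  have htrC : ∀ j, (Matrix.trace (condB (Pr j) (redAC (Matrix.vecMulVec ψ (star ψ))))).re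
      = probB (Pr j) (redAC (Matrix.vecMulVec ψ (star ψ))) := by
    intro j
    rw [hCj j, hpj j, Matrix.trace_transpose]
  have hpnn : ∀ j, 0 ≤ probB (Pr j) (redAC (Matrix.vecMulVec ψ (star ψ))) := by
    intro j
    rw [← htrC j]
    exact psd_trace_re_nonneg (hCpsd j)
  -- entropy bridges
  have hentC : ∀ j, ent (condB (Pr j) (redAC (Matrix.vecMulVec ψ (star ψ))))
      = ent (((Pr j ⊗ₖ (1 : Matrix β β ℂ)) * Mmat ψ) *
          ((Pr j ⊗ₖ (1 : Matrix β β ℂ)) * Mmat ψ)ᴴ) := by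
    intro j
    rw [hCj j]
    refine ent_eq_of_trace_pow ((Matrix.isHermitian_conjTranspose_mul_self _).transpose)
      (Matrix.isHermitian_mul_conjTranspose_self _) (fun k hk => ?_)
    rw [trace_pow_transpose, ← trace_pow_mul_conjT _ k hk]
  have hEab : ent (redAB (Matrix.vecMulVec ψ (star ψ)))
      = ent (ptrFst (redAC (Matrix.vecMulVec ψ (star ψ)))) := by
    rw [hAB, ptrFst_redAC_eq]
    refine ent_eq_of_trace_pow (Matrix.isHermitian_mul_conjTranspose_self _)
      ((Matrix.isHermitian_conjTranspose_mul_self _).transpose) (fun k hk => ?_)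
    rw [trace_pow_transpose, trace_pow_mul_conjT _ k hk]
  -- conditional-entropy term identity
  have hterm : ∀ j, probB (Pr j) (redAC (Matrix.vecMulVec ψ (star ψ))) *
        vN ((probB (Pr j) (redAC (Matrix.vecMulVec ψ (star ψ))))⁻¹ •
          condB (Pr j) (redAC (Matrix.vecMulVec ψ (star ψ))))
      = -(ent (condB (Pr j) (redAC (Matrix.vecMulVec ψ (star ψ)))))
        + probB (Pr j) (redAC (Matrix.vecMulVec ψ (star ψ))) *
          Real.log (probB (Pr j) (redAC (Matrix.vecMulVec ψ (star ψ)))) := by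
    intro j
    rcases eq_or_lt_of_le (hpnn j) with h0 | hpos
    · have hC0 : condB (Pr j) (redAC (Matrix.vecMulVec ψ (star ψ))) = 0 :=
        psd_trace_zero (hCpsd j) (by rw [htrC j, ← h0])
      rw [← h0, hC0, ent_zero]
      simp
    · have hne : probB (Pr j) (redAC (Matrix.vecMulVec ψ (star ψ))) ≠ 0 := ne_of_gt hpos
      have hherm' : (condB (Pr j) (redAC (Matrix.vecMulVec ψ (star ψ)))).IsHermitian :=
        (hCpsd j).1
      have := ent_smul hherm' (probB (Pr j) (redAC (Matrix.vecMulVec ψ (star ψ))))⁻¹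
        (inv_pos.mpr hpos)
      rw [show vN ((probB (Pr j) (redAC (Matrix.vecMulVec ψ (star ψ))))⁻¹ •
          condB (Pr j) (redAC (Matrix.vecMulVec ψ (star ψ))))
        = -(ent ((probB (Pr j) (redAC (Matrix.vecMulVec ψ (star ψ))))⁻¹ •
          condB (Pr j) (redAC (Matrix.vecMulVec ψ (star ψ))))) from rfl, this, htrC j,
        Real.log_inv]
      field_simp
      ring
  -- orthogonality of the pinched blocks
  have horthσ : ∀ j k, j ≠ k →
      ((Pr j ⊗ₖ (1 : Matrix β β ℂ)) * Mmat ψ) * ((Pr j ⊗ₖ (1 : Matrix β β ℂ)) * Mmat ψ)ᴴ *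
        (((Pr k ⊗ₖ (1 : Matrix β β ℂ)) * Mmat ψ) * ((Pr k ⊗ₖ (1 : Matrix β β ℂ)) * Mmat ψ)ᴴ)
      = 0 := by
    intro j k hjk
    rw [← hsig j, ← hsig k]
    calc (Pr j ⊗ₖ (1 : Matrix β β ℂ)) * redAB (Matrix.vecMulVec ψ (star ψ)) *
          (Pr j ⊗ₖ (1 : Matrix β β ℂ)) *
        ((Pr k ⊗ₖ (1 : Matrix β β ℂ)) * redAB (Matrix.vecMulVec ψ (star ψ)) *
          (Pr k ⊗ₖ (1 : Matrix β β ℂ)))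
        = (Pr j ⊗ₖ (1 : Matrix β β ℂ)) * redAB (Matrix.vecMulVec ψ (star ψ)) *
          (((Pr j ⊗ₖ (1 : Matrix β β ℂ)) * (Pr k ⊗ₖ (1 : Matrix β β ℂ))) *
            (redAB (Matrix.vecMulVec ψ (star ψ)) * (Pr k ⊗ₖ (1 : Matrix β β ℂ)))) := by
          simp only [Matrix.mul_assoc]
      _ = 0 := by rw [hQo j k hjk]; simp
  have hσjH : ∀ j, (((Pr j ⊗ₖ (1 : Matrix β β ℂ)) * Mmat ψ) *
      ((Pr j ⊗ₖ (1 : Matrix β β ℂ)) * Mmat ψ)ᴴ).IsHermitian := fun j =>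
    Matrix.isHermitian_mul_conjTranspose_self _
  have hσsum_eq : ∑ j, (Pr j ⊗ₖ (1 : Matrix β β ℂ)) * redAB (Matrix.vecMulVec ψ (star ψ)) *
      (Pr j ⊗ₖ (1 : Matrix β β ℂ))
      = ∑ j, ((Pr j ⊗ₖ (1 : Matrix β β ℂ)) * Mmat ψ) *
          ((Pr j ⊗ₖ (1 : Matrix β β ℂ)) * Mmat ψ)ᴴ :=
    Finset.sum_congr rfl fun j _ => hsig j
  have hσsumH : (∑ j, (Pr j ⊗ₖ (1 : Matrix β β ℂ)) * redAB (Matrix.vecMulVec ψ (star ψ)) *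
      (Pr j ⊗ₖ (1 : Matrix β β ℂ))).IsHermitian := by
    rw [hσsum_eq]
    simp only [Matrix.IsHermitian, Matrix.conjTranspose_sum]
    exact Finset.sum_congr rfl fun j _ => hσjH j
  -- RHS rewriting
  have hRHS : relEnt (redAB (Matrix.vecMulVec ψ (star ψ)))
        (∑ j, (Pr j ⊗ₖ (1 : Matrix β β ℂ)) * redAB (Matrix.vecMulVec ψ (star ψ)) *
          (Pr j ⊗ₖ (1 : Matrix β β ℂ)))
      = ent (redAB (Matrix.vecMulVec ψ (star ψ)))
        - ∑ j, ent (((Pr j ⊗ₖ (1 : Matrix β β ℂ)) * Mmat ψ) *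
            ((Pr j ⊗ₖ (1 : Matrix β β ℂ)) * Mmat ψ)ᴴ) := by
    rw [relEnt]
    congr 1
    rw [trace_pinch _ _ hQi hQo hQ1 hσsumH]
    rw [show Matrix.trace ((∑ j, (Pr j ⊗ₖ (1 : Matrix β β ℂ)) *
        redAB (Matrix.vecMulVec ψ (star ψ)) * (Pr j ⊗ₖ (1 : Matrix β β ℂ))) *
        matLog (∑ j, (Pr j ⊗ₖ (1 : Matrix β β ℂ)) *
        redAB (Matrix.vecMulVec ψ (star ψ)) * (Pr j ⊗ₖ (1 : Matrix β β ℂ)))) =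
      Matrix.trace ((∑ j, ((Pr j ⊗ₖ (1 : Matrix β β ℂ)) * Mmat ψ) *
        ((Pr j ⊗ₖ (1 : Matrix β β ℂ)) * Mmat ψ)ᴴ) *
        matLog (∑ j, ((Pr j ⊗ₖ (1 : Matrix β β ℂ)) * Mmat ψ) *
        ((Pr j ⊗ₖ (1 : Matrix β β ℂ)) * Mmat ψ)ᴴ)) by rw [hσsum_eq]]
    have := ent_sum_of_orth (fun j => ((Pr j ⊗ₖ (1 : Matrix β β ℂ)) * Mmat ψ) *
      ((Pr j ⊗ₖ (1 : Matrix β β ℂ)) * Mmat ψ)ᴴ) hσjH horthσ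
    rw [ent] at this
    rw [this]
  -- final computation
  rw [missing, holevo, shannon, hRHS]
  rw [show vN (ptrFst (redAC (Matrix.vecMulVec ψ (star ψ))))
    = -(ent (ptrFst (redAC (Matrix.vecMulVec ψ (star ψ))))) from rfl]
  rw [← hEab]
  rw [Finset.sum_congr rfl fun j _ => hterm j]
  simp only [hentC]
  rw [Finset.sum_add_distrib, Finset.sum_neg_distrib]
  ring

end main

end Aux

/-- for a tripartite pure state and a projective decomposition `Π` of `I_a`,
`H(Π|c)` equals the relative entropy of `ρ_{ab}` to its pinched version. -/
theorem missing_info_eq_relEnt_pinch {α β γ ι : Type*}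
    [Fintype α] [DecidableEq α] [Fintype β] [DecidableEq β] [Fintype γ] [DecidableEq γ]
    [Fintype ι]
    (ρ : Matrix (α × β × γ) (α × β × γ) ℂ) (hρ : IsDensity ρ) (hpure : IsPure ρ)
    (Pr : ι → Matrix α α ℂ) (hPr : IsProjDecomp Pr) :
    missing Pr (redAC ρ) =
      relEnt (redAB ρ)
        (∑ j, (Pr j ⊗ₖ (1 : Matrix β β ℂ)) * redAB ρ * (Pr j ⊗ₖ (1 : Matrix β β ℂ))) := by
  obtain ⟨ψ, rfl⟩ := hpure
  exact Aux.main ψ Pr hPr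
end
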